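/- Let z ∈ ℝ, q > 0, 0 < L < ∞, and let e : ℝ → ℝ satisfy e(x) = 0 for all |x| ≥ q and |e(x) − e(y)| ≤ L|x − y| for all x, y; set b(x) = x + z + e(x). Let K be a finite constant with |φ(u) − φ(v)| ≤ K|u − v| for all u, v, where φ is the standard normal density. Let ψ ∈ ℝ, let X ~ N(ψ,1), and let R be a positive random variable independent of X with E(R²) = 1 and E(|R − 1| R²) < ∞. Then | (E[R·b(X/R) + R·b(−X/R)] − 2z E(R)) − (E[b(X) + b(−X)] − 2z) | ≤ 4 L K q³ E(|R − 1| R²), and this bound does not depend on ψ. -/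

import Mathlib

open MeasureTheory ProbabilityTheory Real
open scoped ENNReal NNReal

/-- The standard normal probability density function. -/
noncomputable def stdNormalPDF (u : ℝ) : ℝ :=
  (Real.sqrt (2 * π))⁻¹ * Real.exp (-u ^ 2 / 2)

lemma stdNormalPDF_cont : Continuous stdNormalPDF := by
  unfold stdNormalPDF
  fun_prop

lemma stdNormalPDF_nonneg (u : ℝ) : 0 ≤ stdNormalPDF u := by
  unfold stdNormalPDF; positivity

lemma stdNormalPDF_le (u : ℝ) : stdNormalPDF u ≤ (Real.sqrt (2 * π))⁻¹ := by
  unfold stdNormalPDF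
  have h1 : Real.exp (-u ^ 2 / 2) ≤ 1 := by
    rw [Real.exp_le_one_iff]; nlinarith [sq_nonneg u]
  have h2 : (0:ℝ) ≤ (Real.sqrt (2*π))⁻¹ := by positivity
  nlinarith

lemma integral_gaussianReal_density (ψ : ℝ) (g : ℝ → ℝ) :
    ∫ x, g x ∂(gaussianReal ψ 1) = ∫ x, gaussianPDFReal ψ 1 x * g x := by
  rw [gaussianReal_of_var_ne_zero ψ one_ne_zero]
  have h : (gaussianPDF ψ 1) = fun x => ((gaussianPDFReal ψ 1 x).toNNReal : ℝ≥0∞) := rfl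
  rw [h, integral_withDensity_eq_integral_smul ((measurable_gaussianPDFReal ψ 1).real_toNNReal)]
  congr 1; funext x
  rw [NNReal.smul_def, smul_eq_mul, Real.coe_toNNReal _ (gaussianPDFReal_nonneg ψ 1 x)]

lemma gaussianPDFReal_one_eq (ψ x : ℝ) : gaussianPDFReal ψ 1 x = stdNormalPDF (x - ψ) := by
  rw [gaussianPDFReal, stdNormalPDF]
  norm_num

lemma aux_compact {q C : ℝ} (hq : 0 < q) (f : ℝ → ℝ)
    (hm : AEStronglyMeasurable f (volume : Measure ℝ))
    (hb : ∀ x, |f x| ≤ C) (h0 : ∀ x, q ≤ |x| → f x = 0) :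
    Integrable f volume ∧ |∫ x, f x| ≤ C * (2 * q) := by
  have hC : 0 ≤ C := le_trans (abs_nonneg _) (hb 0)
  have hind : f = Set.indicator (Set.Icc (-q) q) f := by
    funext x
    by_cases h : x ∈ Set.Icc (-q) q
    · rw [Set.indicator_of_mem h]
    · rw [Set.indicator_of_notMem h, h0]
      rw [Set.mem_Icc] at h
      rw [le_abs]
      rcases lt_or_ge x 0 with h' | h'
      · right; by_contra hc; push_neg at hc; exact h ⟨by linarith, by linarith⟩
      · left; by_contra hc; push_neg at hc; exact h ⟨by linarith, by linarith⟩
  have hvol : (volume (Set.Icc (-q) q)) < ⊤ := by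
    rw [Real.volume_Icc]; exact ENNReal.ofReal_lt_top
  have hInt : Integrable f volume := by
    rw [hind, integrable_indicator_iff measurableSet_Icc]
    refine Integrable.mono' ((integrableOn_const_iff (C := C)).mpr (Or.inr hvol)) hm.restrict ?_
    exact ae_of_all _ fun x => by rw [Real.norm_eq_abs]; exact hb x
  refine ⟨hInt, ?_⟩
  have h1 : ∫ x, f x = ∫ x in Set.Icc (-q) q, f x := by
    conv_lhs => rw [hind]
    exact integral_indicator measurableSet_Icc
  rw [h1, ← Real.norm_eq_abs]
  have h2 := norm_setIntegral_le_of_norm_le_const (μ := volume) (f := f) (C := C) hvol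
    (fun x _ => by rw [Real.norm_eq_abs]; exact hb x)
  calc ‖∫ x in Set.Icc (-q) q, f x‖ ≤ C * (volume (Set.Icc (-q) q)).toReal := h2
    _ = C * (2 * q) := by
        rw [Real.volume_Icc, ENNReal.toReal_ofReal (by linarith)]
        ring

/-- For `b(x) = x + z + e(x)` with `e` `L`-Lipschitz and vanishing outside
`[-q, q]`, `K` a Lipschitz constant for the standard normal density `φ`, `X ~ N(ψ,1)` and
`R > 0` (a.s.) independent of `X` with law `ρ`, `E(R²) = 1` and `E(|R−1| R²) < ∞`:
`|(E[R b(X/R) + R b(-X/R)] − 2z E(R)) − (E[b(X) + b(-X)] − 2z)| ≤ 4 L K q³ E(|R−1| R²)`,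
a bound not depending on `ψ`. -/
theorem statement13
    (z : ℝ) (q : ℝ) (hq : 0 < q) (L : ℝ) (hL : 0 < L)
    (e : ℝ → ℝ)
    (he_zero : ∀ x : ℝ, q ≤ |x| → e x = 0)
    (he_lip : ∀ x y : ℝ, |e x - e y| ≤ L * |x - y|)
    (b : ℝ → ℝ) (hb : ∀ x, b x = x + z + e x)
    (K : ℝ) (hK : ∀ u v : ℝ, |stdNormalPDF u - stdNormalPDF v| ≤ K * |u - v|)
    (ρ : Measure ℝ) [IsProbabilityMeasure ρ]
    (hρ_pos : ∀ᵐ r ∂ρ, 0 < r)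
    (hρ_mom2 : Integrable (fun r : ℝ => r ^ 2) ρ)
    (hρ_mom2_one : (∫ r, r ^ 2 ∂ρ) = 1)
    (hρ_mom3 : Integrable (fun r : ℝ => |r - 1| * r ^ 2) ρ)
    (ψ : ℝ) :
    |((∫ p, (p.2 * b (p.1 / p.2) + p.2 * b (-(p.1 / p.2)))
          ∂(gaussianReal ψ 1).prod ρ) - 2 * z * ∫ r, r ∂ρ) -
        ((∫ x, (b x + b (-x)) ∂gaussianReal ψ 1) - 2 * z)| ≤
      4 * L * K * q ^ 3 * ∫ r, |r - 1| * r ^ 2 ∂ρ := by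
  set μ : Measure ℝ := gaussianReal ψ 1 with hμ
  have hL0 : (0:ℝ) ≤ L := hL.le
  have hK0 : (0:ℝ) ≤ K := le_trans (abs_nonneg _) (by simpa using hK 0 1)
  -- basic facts about e
  have heq : e q = 0 := he_zero q (le_of_eq (abs_of_pos hq).symm)
  have heq' : e (-q) = 0 := he_zero (-q) (by rw [abs_neg, abs_of_pos hq])
  have he_bd : ∀ x, |e x| ≤ L * q := by
    intro x
    rcases le_or_gt q |x| with h | h
    · rw [he_zero x h, abs_zero]; positivity
    · rw [abs_lt] at h
      rcases le_or_gt 0 x with h' | h'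
      · calc |e x| = |e x - e q| := by rw [heq, sub_zero]
          _ ≤ L * |x - q| := he_lip x q
          _ ≤ L * q := by
              rw [abs_of_nonpos (by linarith)]
              nlinarith
      · calc |e x| = |e x - e (-q)| := by rw [heq', sub_zero]
          _ ≤ L * |x + q| := by have := he_lip x (-q); rwa [sub_neg_eq_add] at this
          _ ≤ L * q := by rw [abs_of_nonneg (by linarith)]; nlinarith
  have he_cont : Continuous e := by
    have hlw : LipschitzWith (Real.toNNReal L) e := by
      apply LipschitzWith.of_dist_le_mul
      intro x y
      rw [Real.dist_eq, Real.dist_eq, Real.coe_toNNReal L hL0]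
      exact he_lip x y
    exact hlw.continuous
  have he_meas : Measurable e := he_cont.measurable
  have hsum_bd : ∀ x : ℝ, |e x + e (-x)| ≤ 2 * (L * q) := by
    intro x
    calc |e x + e (-x)| ≤ |e x| + |e (-x)| := abs_add_le _ _
      _ ≤ 2 * (L * q) := by have := he_bd x; have := he_bd (-x); linarith
  have hsum_zero : ∀ x : ℝ, q ≤ |x| → e x + e (-x) = 0 := by
    intro x hx
    rw [he_zero x hx, he_zero (-x) (by rwa [abs_neg]), add_zero]
  -- integrability over ρ
  have hr_int : Integrable (fun r : ℝ => r) ρ := by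
    refine Integrable.mono' ((integrable_const (1:ℝ)).add hρ_mom2) aestronglyMeasurable_id
      (ae_of_all _ fun r => ?_)
    show |r| ≤ 1 + r ^ 2
    nlinarith [sq_nonneg (|r| - 1), sq_abs r]
  -- integrability over the product
  have hsnd : Integrable (fun p : ℝ × ℝ => p.2) (μ.prod ρ) := by
    have h := (integrable_const (1:ℝ)).mul_prod hr_int (μ := μ)
    simpa using h
  set E2 : ℝ × ℝ → ℝ := fun p => p.2 * (e (p.1 / p.2) + e (-(p.1 / p.2))) with hE2
  have hE2_meas : AEStronglyMeasurable E2 (μ.prod ρ) := by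
    apply Measurable.aestronglyMeasurable
    exact measurable_snd.mul (((he_meas.comp (measurable_fst.div measurable_snd))).add
      (he_meas.comp (measurable_fst.div measurable_snd).neg))
  have hE2_int : Integrable E2 (μ.prod ρ) := by
    refine Integrable.mono' (hsnd.abs.const_mul (2 * (L * q))) hE2_meas (ae_of_all _ fun p => ?_)
    rw [Real.norm_eq_abs, hE2, abs_mul]
    have h1 := hsum_bd (p.1 / p.2)
    have h2 := abs_nonneg p.2
    calc |p.2| * |e (p.1 / p.2) + e (-(p.1 / p.2))| ≤ |p.2| * (2 * (L * q)) := by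
          exact mul_le_mul_of_nonneg_left h1 h2
      _ = 2 * (L * q) * |p.2| := by ring
  -- rewriting the product integral
  have hA : (∫ p, (p.2 * b (p.1 / p.2) + p.2 * b (-(p.1 / p.2))) ∂(μ.prod ρ))
      = 2 * z * (∫ r, r ∂ρ) + ∫ p, E2 p ∂(μ.prod ρ) := by
    have h1 : ∀ p : ℝ × ℝ, p.2 * b (p.1 / p.2) + p.2 * b (-(p.1 / p.2))
        = 2 * z * p.2 + E2 p := by
      intro p
      rw [hE2, hb, hb]
      ring
    rw [integral_congr_ae (ae_of_all _ h1), integral_add (hsnd.const_mul (2 * z)) hE2_int]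
    congr 1
    rw [integral_const_mul]
    congr 1
    rw [integral_prod_symm _ hsnd]
    simp
  -- rewriting the gaussian integral
  set H : ℝ := ∫ x, (e x + e (-x)) ∂μ with hH
  have hE1_int : Integrable (fun x => e x + e (-x)) μ := by
    refine Integrable.mono' (integrable_const (2 * (L * q)))
      ((he_meas.add (he_meas.comp measurable_neg)).aestronglyMeasurable)
      (ae_of_all _ fun x => ?_)
    rw [Real.norm_eq_abs]
    exact hsum_bd x
  have hB : (∫ x, (b x + b (-x)) ∂μ) = 2 * z + H := by
    have h2 : ∀ x : ℝ, b x + b (-x) = 2 * z + (e x + e (-x)) := by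
      intro x; rw [hb, hb]; ring
    rw [integral_congr_ae (ae_of_all _ h2), integral_add (integrable_const _) hE1_int]
    simp [hH]
  -- Fubini
  set I : ℝ → ℝ := fun r => ∫ x, r * (e (x / r) + e (-(x / r))) ∂μ with hI
  have hFub : ∫ p, E2 p ∂(μ.prod ρ) = ∫ r, I r ∂ρ := integral_prod_symm _ hE2_int
  have hI_int : Integrable I ρ := hE2_int.integral_prod_right
  -- key pointwise bound
  have key : ∀ r : ℝ, 0 < r →
      |I r - r ^ 2 * H| ≤ 4 * L * K * q ^ 3 * (|r - 1| * r ^ 2) := by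
    intro r hr
    have hr0 : r ≠ 0 := hr.ne'
    set Fr : ℝ → ℝ := fun u => stdNormalPDF (r * u - ψ) * (e u + e (-u)) with hFr
    set F1 : ℝ → ℝ := fun u => stdNormalPDF (u - ψ) * (e u + e (-u)) with hF1
    have hFr_meas : AEStronglyMeasurable Fr (volume : Measure ℝ) :=
      ((stdNormalPDF_cont.comp (by continuity)).mul
        (he_cont.add (he_cont.comp continuous_neg))).aestronglyMeasurable
    have hF1_meas : AEStronglyMeasurable F1 (volume : Measure ℝ) :=
      ((stdNormalPDF_cont.comp (by continuity)).mul
        (he_cont.add (he_cont.comp continuous_neg))).aestronglyMeasurable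
    have hM : (0:ℝ) ≤ (Real.sqrt (2 * π))⁻¹ := by positivity
    have hFr_bd : ∀ u, |Fr u| ≤ (Real.sqrt (2 * π))⁻¹ * (2 * (L * q)) := by
      intro u
      rw [hFr, abs_mul, abs_of_nonneg (stdNormalPDF_nonneg _)]
      exact mul_le_mul (stdNormalPDF_le _) (hsum_bd u) (abs_nonneg _) hM
    have hF1_bd : ∀ u, |F1 u| ≤ (Real.sqrt (2 * π))⁻¹ * (2 * (L * q)) := by
      intro u
      rw [hF1, abs_mul, abs_of_nonneg (stdNormalPDF_nonneg _)]
      exact mul_le_mul (stdNormalPDF_le _) (hsum_bd u) (abs_nonneg _) hM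
    have hFr_supp : ∀ u, q ≤ |u| → Fr u = 0 := fun u hu => by
      rw [hFr]; simp only; rw [hsum_zero u hu, mul_zero]
    have hF1_supp : ∀ u, q ≤ |u| → F1 u = 0 := fun u hu => by
      rw [hF1]; simp only; rw [hsum_zero u hu, mul_zero]
    obtain ⟨hFr_int, -⟩ := aux_compact hq Fr hFr_meas hFr_bd hFr_supp
    obtain ⟨hF1_int, -⟩ := aux_compact hq F1 hF1_meas hF1_bd hF1_supp
    -- I r = r^2 * ∫ Fr
    have hIr : I r = r ^ 2 * ∫ u, Fr u := by
      rw [hI]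
      simp only
      rw [integral_const_mul, hμ, integral_gaussianReal_density]
      have hcv : ∀ x : ℝ, gaussianPDFReal ψ 1 x * (e (x / r) + e (-(x / r)))
          = Fr (r⁻¹ * x) := by
        intro x
        rw [gaussianPDFReal_one_eq, hFr]
        simp only
        rw [mul_inv_cancel_left₀ hr0, inv_mul_eq_div]
      rw [integral_congr_ae (ae_of_all _ hcv), Measure.integral_comp_inv_mul_left Fr r,
        smul_eq_mul, abs_of_pos hr]
      ring
    -- H = ∫ F1
    have hHval : H = ∫ u, F1 u := by
      rw [hH, hμ, integral_gaussianReal_density]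
      apply integral_congr_ae (ae_of_all _ fun x => ?_)
      rw [gaussianPDFReal_one_eq, hF1]
    -- the difference
    have hdiff_bd : ∀ u, |Fr u - F1 u| ≤ K * |r - 1| * q * (2 * (L * q)) := by
      intro u
      rcases le_or_gt q |u| with h | h
      · rw [hFr_supp u h, hF1_supp u h, sub_zero, abs_zero]
        positivity
      · rw [hFr, hF1]
        simp only
        rw [← sub_mul, abs_mul]
        have h1 : |stdNormalPDF (r * u - ψ) - stdNormalPDF (u - ψ)| ≤ K * |r - 1| * q := by
          calc |stdNormalPDF (r * u - ψ) - stdNormalPDF (u - ψ)|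
              ≤ K * |(r * u - ψ) - (u - ψ)| := hK _ _
            _ = K * (|r - 1| * |u|) := by rw [show (r * u - ψ) - (u - ψ) = (r - 1) * u by ring,
                abs_mul]
            _ ≤ K * |r - 1| * q := by
                rw [mul_assoc]
                have : |r - 1| * |u| ≤ |r - 1| * q :=
                  mul_le_mul_of_nonneg_left h.le (abs_nonneg _)
                exact mul_le_mul_of_nonneg_left this hK0
        exact mul_le_mul h1 (hsum_bd u) (abs_nonneg _) (by positivity)
    have hdiff_meas : AEStronglyMeasurable (fun u => Fr u - F1 u) (volume : Measure ℝ) :=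
      hFr_meas.sub hF1_meas
    have hdiff_supp : ∀ u, q ≤ |u| → Fr u - F1 u = 0 := fun u hu => by
      rw [hFr_supp u hu, hF1_supp u hu, sub_zero]
    obtain ⟨hdint, hdiff⟩ := aux_compact hq _ hdiff_meas hdiff_bd hdiff_supp
    rw [integral_sub hFr_int hF1_int] at hdiff
    have : I r - r ^ 2 * H = r ^ 2 * ((∫ u, Fr u) - ∫ u, F1 u) := by
      rw [hIr, hHval]; ring
    rw [this, abs_mul, abs_of_nonneg (sq_nonneg r)]
    calc r ^ 2 * |(∫ u, Fr u) - ∫ u, F1 u|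
        ≤ r ^ 2 * (K * |r - 1| * q * (2 * (L * q)) * (2 * q)) :=
          mul_le_mul_of_nonneg_left hdiff (sq_nonneg r)
      _ = 4 * L * K * q ^ 3 * (|r - 1| * r ^ 2) := by ring
  -- assemble
  rw [hA, hB, hFub]
  have hHconst : H = ∫ r, r ^ 2 * H ∂ρ := by
    rw [integral_mul_const, hρ_mom2_one, one_mul]
  have heq2 : 2 * z * (∫ r, r ∂ρ) + (∫ r, I r ∂ρ) - 2 * z * (∫ r, r ∂ρ) - (2 * z + H - 2 * z)
      = ∫ r, (I r - r ^ 2 * H) ∂ρ := by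
    rw [integral_sub hI_int (hρ_mom2.mul_const H), ← hHconst]
    ring
  rw [heq2, ← Real.norm_eq_abs]
  calc ‖∫ r, (I r - r ^ 2 * H) ∂ρ‖
      ≤ ∫ r, 4 * L * K * q ^ 3 * (|r - 1| * r ^ 2) ∂ρ := by
        refine norm_integral_le_of_norm_le (hρ_mom3.const_mul _) ?_
        filter_upwards [hρ_pos] with r hr
        rw [Real.norm_eq_abs]
        exact key r hr
    _ = 4 * L * K * q ^ 3 * ∫ r, |r - 1| * r ^ 2 ∂ρ := integral_const_mul _ _
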